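/- Let g be a quasitriangular Lie bialgebra and let b be a g-covariant Lie algebra in the category of g-modules. Then the infinitesimal braiding ψ : b ⊗ b → b ⊗ b defined by ψ(a ⊗ b) = 2r₊ ▷ (a ⊗ b − b ⊗ a), where 2r₊ = r + τ(r) acts via the extended action on the tensor square, is a 2-cocycle in Z²_ad(b, b ⊗ b). -/
import Mathlib


open scoped TensorProduct

/-- Let `(g, r)` be a quasitriangular Lie bialgebra over ℂ, with
`r = Σᵢ ra i ⊗ rb i` satisfying the classical Yang–Baxter equation and with ad-invariant
symmetric part `2r₊ = Σᵢ (ra i ⊗ rb i + rb i ⊗ ra i)`.  Let `B` be a `g`-covariant Lie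
algebra in the category of `g`-modules (the `g`-action is by derivations of the bracket of
`B`).  Then the infinitesimal braiding `ψ(a ⊗ b) = 2r₊ ▷ (a ⊗ b − b ⊗ a)` is a 2-cocycle in
`Z²_ad(B, B ⊗ B)`, i.e. its Chevalley–Eilenberg differential with respect to the adjoint
action of `B` on `B ⊗ B` vanishes. -/
theorem stmt6
    (g : Type) [LieRing g] [LieAlgebra ℂ g]
    (ι : Type) [Fintype ι] (ra rb : ι → g)
    -- classical Yang–Baxter equation [[r,r]] = [r₁₂,r₁₃] + [r₁₂,r₂₃] + [r₁₃,r₂₃] = 0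
    (hCYBE : (∑ i : ι, ∑ j : ι,
        (⁅ra i, ra j⁆ ⊗ₜ[ℂ] (rb i ⊗ₜ[ℂ] rb j)
          + ra i ⊗ₜ[ℂ] (⁅rb i, ra j⁆ ⊗ₜ[ℂ] rb j)
          + ra i ⊗ₜ[ℂ] (ra j ⊗ₜ[ℂ] ⁅rb i, rb j⁆))) = (0 : g ⊗[ℂ] (g ⊗[ℂ] g)))
    -- ad-invariance of the symmetric part 2r₊
    (hinv : ∀ x : g, (∑ i : ι,
        (⁅x, ra i⁆ ⊗ₜ[ℂ] rb i + ra i ⊗ₜ[ℂ] ⁅x, rb i⁆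
          + ⁅x, rb i⁆ ⊗ₜ[ℂ] ra i + rb i ⊗ₜ[ℂ] ⁅x, ra i⁆)) = (0 : g ⊗[ℂ] g))
    (B : Type) [LieRing B] [LieAlgebra ℂ B]
    [LieRingModule g B] [LieModule ℂ g B]
    -- `g` acts on the Lie algebra `B` by derivations (g-covariant Lie algebra)
    (hcov : ∀ (x : g) (u v : B), ⁅x, ⁅u, v⁆⁆ = ⁅⁅x, u⁆, v⁆ + ⁅u, ⁅x, v⁆⁆)
    -- the infinitesimal braiding ψ(u ⊗ v) = 2r₊ ▷ (u ⊗ v − v ⊗ u)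
    (ψ : B → B → B ⊗[ℂ] B)
    (hψ : ∀ u v : B, ψ u v = ∑ i : ι,
        (⁅ra i, u⁆ ⊗ₜ[ℂ] ⁅rb i, v⁆ + ⁅rb i, u⁆ ⊗ₜ[ℂ] ⁅ra i, v⁆
          - ⁅ra i, v⁆ ⊗ₜ[ℂ] ⁅rb i, u⁆ - ⁅rb i, v⁆ ⊗ₜ[ℂ] ⁅ra i, u⁆)) :
    -- ψ is a 2-cocycle: dψ = 0 in the Chevalley–Eilenberg complex of B with values in B ⊗ B
    ∀ x y z : B,
      ⁅x, ψ y z⁆ - ⁅y, ψ x z⁆ + ⁅z, ψ x y⁆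
        - ψ ⁅x, y⁆ z + ψ ⁅x, z⁆ y - ψ ⁅y, z⁆ x = 0 := by
  -- flipped form of covariance: always put the `g`-acted element in the right slot
  have hcov' : ∀ (w : g) (u v : B), ⁅w, ⁅u, v⁆⁆ = ⁅u, ⁅w, v⁆⁆ - ⁅v, ⁅w, u⁆⁆ := by
    intro w u v
    rw [hcov w u v, ← lie_skew ⁅w, u⁆ v]
    abel
  -- per-index identity
  have key : ∀ (a b : g) (x y z : B),
      (⁅x, (⁅a, y⁆ ⊗ₜ[ℂ] ⁅b, z⁆ + ⁅b, y⁆ ⊗ₜ[ℂ] ⁅a, z⁆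
          - ⁅a, z⁆ ⊗ₜ[ℂ] ⁅b, y⁆ - ⁅b, z⁆ ⊗ₜ[ℂ] ⁅a, y⁆)⁆
        - ⁅y, (⁅a, x⁆ ⊗ₜ[ℂ] ⁅b, z⁆ + ⁅b, x⁆ ⊗ₜ[ℂ] ⁅a, z⁆
          - ⁅a, z⁆ ⊗ₜ[ℂ] ⁅b, x⁆ - ⁅b, z⁆ ⊗ₜ[ℂ] ⁅a, x⁆)⁆
        + ⁅z, (⁅a, x⁆ ⊗ₜ[ℂ] ⁅b, y⁆ + ⁅b, x⁆ ⊗ₜ[ℂ] ⁅a, y⁆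
          - ⁅a, y⁆ ⊗ₜ[ℂ] ⁅b, x⁆ - ⁅b, y⁆ ⊗ₜ[ℂ] ⁅a, x⁆)⁆
        - (⁅a, ⁅x, y⁆⁆ ⊗ₜ[ℂ] ⁅b, z⁆ + ⁅b, ⁅x, y⁆⁆ ⊗ₜ[ℂ] ⁅a, z⁆
          - ⁅a, z⁆ ⊗ₜ[ℂ] ⁅b, ⁅x, y⁆⁆ - ⁅b, z⁆ ⊗ₜ[ℂ] ⁅a, ⁅x, y⁆⁆)
        + (⁅a, ⁅x, z⁆⁆ ⊗ₜ[ℂ] ⁅b, y⁆ + ⁅b, ⁅x, z⁆⁆ ⊗ₜ[ℂ] ⁅a, y⁆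
          - ⁅a, y⁆ ⊗ₜ[ℂ] ⁅b, ⁅x, z⁆⁆ - ⁅b, y⁆ ⊗ₜ[ℂ] ⁅a, ⁅x, z⁆⁆)
        - (⁅a, ⁅y, z⁆⁆ ⊗ₜ[ℂ] ⁅b, x⁆ + ⁅b, ⁅y, z⁆⁆ ⊗ₜ[ℂ] ⁅a, x⁆
          - ⁅a, x⁆ ⊗ₜ[ℂ] ⁅b, ⁅y, z⁆⁆ - ⁅b, x⁆ ⊗ₜ[ℂ] ⁅a, ⁅y, z⁆⁆)) = (0 : B ⊗[ℂ] B) := by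
    intro a b x y z
    simp only [hcov', lie_add, lie_sub, TensorProduct.LieModule.lie_tmul_right,
      TensorProduct.sub_tmul, TensorProduct.tmul_sub, TensorProduct.add_tmul,
      TensorProduct.tmul_add]
    abel
  have lsum : ∀ (w : B) (f : ι → B ⊗[ℂ] B), ⁅w, ∑ i : ι, f i⁆ = ∑ i : ι, ⁅w, f i⁆ :=
    fun w f => map_sum (LieModule.toEnd ℂ B (B ⊗[ℂ] B) w) f Finset.univ
  intro x y z
  simp only [hψ, lsum, ← Finset.sum_add_distrib, ← Finset.sum_sub_distrib]
  exact Finset.sum_eq_zero fun i _ => key (ra i) (rb i) x y z
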